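/- arXiv:2511.12545 — 2 statements merged into one kernel-verified Lean document; each statement's English description precedes it below -/
import Mathlib

section
/- Let q ∈ [0, 1), let ν be a Borel probability measure on ℝ^d with ν({v : ‖v‖ ≤ q}) = q (Euclidean norm), and let Q₁, Q₂ : ℝ^d → ℝ^d be Borel-measurable maps with pushforwards P₁ = Q₁ # ν, P₂ = Q₂ # ν, such that Q₁(v) ≥ Q₂(v) componentwise for all v with ‖v‖ ≤ q. Let u : ℝ^d → ℝ be Borel-measurable, nondecreasing, and bounded with m ≤ u ≤ M. Define Δ_q = ∫_{‖v‖ ≤ q} ( u(Q₁(v)) − u(Q₂(v)) ) dν(v). Then Δ_q ≥ 0 and ∫ u dP₁ − ∫ u dP₂ ≥ Δ_q − (1 − q)(M − m). -/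
open MeasureTheory

/-- for `q ∈ [0,1)`, a Borel probability `ν` on `ℝ^d` with
`ν({‖v‖ ≤ q}) = q`, Borel maps `Q₁, Q₂` with `Q₁(v) ≥ Q₂(v)` componentwise on
`{‖v‖ ≤ q}`, and a bounded Borel-measurable nondecreasing `u` with
`m ≤ u ≤ M`, the quantity `Δ_q = ∫_{‖v‖≤q} (u(Q₁(v)) − u(Q₂(v))) dν` satisfies
`Δ_q ≥ 0` and `∫ u d(Q₁ # ν) − ∫ u d(Q₂ # ν) ≥ Δ_q − (1 − q)(M − m)`. -/
theorem qdominance_utility_gap_bound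
    (d : ℕ) (q : ℝ) (hq0 : 0 ≤ q) (hq1 : q < 1)
    (ν : Measure (EuclideanSpace ℝ (Fin d))) [IsProbabilityMeasure ν]
    (hν : ν {v : EuclideanSpace ℝ (Fin d) | ‖v‖ ≤ q} = ENNReal.ofReal q)
    (Q₁ Q₂ : EuclideanSpace ℝ (Fin d) → EuclideanSpace ℝ (Fin d))
    (hQ₁ : Measurable Q₁) (hQ₂ : Measurable Q₂)
    (hdom : ∀ v : EuclideanSpace ℝ (Fin d), ‖v‖ ≤ q → ∀ i, Q₂ v i ≤ Q₁ v i)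
    (u : EuclideanSpace ℝ (Fin d) → ℝ) (hu : Measurable u)
    (hmono : ∀ x y : EuclideanSpace ℝ (Fin d), (∀ i, x i ≤ y i) → u x ≤ u y)
    (m M : ℝ) (hbd : ∀ x, m ≤ u x ∧ u x ≤ M) :
    0 ≤ ∫ v in {v : EuclideanSpace ℝ (Fin d) | ‖v‖ ≤ q}, (u (Q₁ v) - u (Q₂ v)) ∂ν ∧
    (∫ v in {v : EuclideanSpace ℝ (Fin d) | ‖v‖ ≤ q}, (u (Q₁ v) - u (Q₂ v)) ∂ν)
        - (1 - q) * (M - m)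
      ≤ (∫ x, u x ∂(ν.map Q₁)) - ∫ x, u x ∂(ν.map Q₂) := by
  set S : Set (EuclideanSpace ℝ (Fin d)) := {v | ‖v‖ ≤ q} with hS
  have hSmeas : MeasurableSet S := (isClosed_le continuous_norm continuous_const).measurableSet
  have hbound : ∀ x, ‖u x‖ ≤ max |m| |M| := by
    intro x
    rcases hbd x with ⟨h1, h2⟩
    rw [Real.norm_eq_abs, abs_le]
    constructor
    · calc -(max |m| |M|) ≤ -|m| := by simp
        _ ≤ m := neg_abs_le m
        _ ≤ u x := h1
    · exact h2.trans ((le_abs_self M).trans (le_max_right _ _))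
  have hint : ∀ (Q : EuclideanSpace ℝ (Fin d) → EuclideanSpace ℝ (Fin d)),
      Measurable Q → Integrable (fun v => u (Q v)) ν := by
    intro Q hQ
    exact ⟨(hu.comp hQ).aestronglyMeasurable,
      HasFiniteIntegral.of_bounded (C := max |m| |M|) (Filter.Eventually.of_forall fun v => hbound _)⟩
  have hint1 := hint Q₁ hQ₁
  have hint2 := hint Q₂ hQ₂
  have hintsub : Integrable (fun v => u (Q₁ v) - u (Q₂ v)) ν := hint1.sub hint2
  -- nonnegativity of Δ_q
  have hΔ : 0 ≤ ∫ v in S, (u (Q₁ v) - u (Q₂ v)) ∂ν := by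
    apply setIntegral_nonneg hSmeas
    intro v hv
    have := hmono (Q₂ v) (Q₁ v) (hdom v hv)
    linarith
  refine ⟨hΔ, ?_⟩
  -- rewrite pushforward integrals
  rw [integral_map hQ₁.aemeasurable hu.aestronglyMeasurable,
      integral_map hQ₂.aemeasurable hu.aestronglyMeasurable]
  have hsplit : (∫ v, u (Q₁ v) ∂ν) - ∫ v, u (Q₂ v) ∂ν
      = (∫ v in S, (u (Q₁ v) - u (Q₂ v)) ∂ν) + ∫ v in Sᶜ, (u (Q₁ v) - u (Q₂ v)) ∂ν := by
    rw [integral_add_compl hSmeas hintsub, integral_sub hint1 hint2]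
  rw [hsplit]
  have hScompl : (ν Sᶜ).toReal = 1 - q := by
    rw [measure_compl hSmeas (measure_ne_top ν S), hν, measure_univ]
    rw [ENNReal.toReal_sub_of_le (by simpa using hq1.le) (by simp)]
    simp [ENNReal.toReal_ofReal hq0]
  -- bound the integral on the complement
  have hlow : (m - M) * (ν Sᶜ).toReal ≤ ∫ v in Sᶜ, (u (Q₁ v) - u (Q₂ v)) ∂ν := by
    apply setIntegral_ge_of_const_le_real hSmeas.compl (measure_ne_top ν Sᶜ)
    · intro v _
      rcases hbd (Q₁ v) with ⟨h1, _⟩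
      rcases hbd (Q₂ v) with ⟨_, h2⟩
      linarith
    · exact hintsub.integrableOn
  rw [hScompl] at hlow
  linarith
end

section
/- (Uniqueness of the optimal quadratic transport map.) Let P₁ and P₂ be Borel probability measures on ℝ^d with finite second moments, with P₁ absolutely continuous with respect to Lebesgue measure. If T and T' are Borel-measurable maps ℝ^d → ℝ^d such that each pushes P₁ forward to P₂ and each is optimal for the quadratic cost, i.e. ∫ ‖x − T(x)‖² dP₁ = ∫ ‖x − T'(x)‖² dP₁ = inf over couplings γ of (P₁,P₂) of ∫ ‖x − y‖² dγ, then T = T' P₁-almost everywhere; that is, P₁({x : T(x) ≠ T'(x)}) = 0. -/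
open MeasureTheory Set Filter
open scoped RealInnerProductSpace Topology ENNReal

lemma line_null {n : ℕ} (i : Fin (n+1)) (F : Set (Fin (n+1) → ℝ)) (hF : MeasurableSet F)
    (hline : ∀ x ∈ F, ∀ y ∈ F, (∀ j, j ≠ i → x j = y j) → x = y) :
    volume F = 0 := by
  set e := MeasurableEquiv.piFinSuccAbove (fun _ : Fin (n+1) => ℝ) i with he
  have hmp := measurePreserving_piFinSuccAbove (fun _ : Fin (n+1) => (volume : Measure ℝ)) i
  have himg : MeasurableSet (e '' F) := e.measurableSet_image.2 hF
  have h1 : volume F = ((volume : Measure ℝ).prod (Measure.pi fun _ => volume)) (e '' F) := by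
    rw [← hmp.map_eq, MeasurableEquiv.map_apply]
    rw [show (⇑(MeasurableEquiv.piFinSuccAbove (fun _ : Fin (n+1) => ℝ) i)) ⁻¹' (⇑e '' F) = e ⁻¹' (e '' F) from rfl, Set.preimage_image_eq _ e.injective, volume_pi]
  rw [h1, Measure.prod_apply_symm himg]
  have : ∀ y, ((fun x => (x, y)) ⁻¹' (e '' F)) = (∅ : Set ℝ) ∨
      ∃ t, ((fun x => (x, y)) ⁻¹' (e '' F)) ⊆ {t} := by
    intro y
    rcases eq_empty_or_nonempty ((fun x => (x, y)) ⁻¹' (e '' F)) with h | ⟨t, ht⟩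
    · exact Or.inl h
    · refine Or.inr ⟨t, fun s hs => ?_⟩
      obtain ⟨a, haF, hae⟩ := ht
      obtain ⟨b, hbF, hbe⟩ := hs
      have hab : a = b := by
        apply hline a haF b hbF
        intro j hj
        obtain ⟨k, hk⟩ := Fin.exists_succAbove_eq hj
        have h1 : a (i.succAbove k) = y k := by
          have := congrArg Prod.snd hae; exact congrFun this k
        have h2 : b (i.succAbove k) = y k := by
          have := congrArg Prod.snd hbe; exact congrFun this k
        rw [← hk, h1, h2]
      have : a i = b i := by rw [hab]
      have h1 : a i = t := congrArg Prod.fst hae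
      have h2 : b i = s := congrArg Prod.fst hbe
      simp [← h1, ← h2, this]
  have : ∀ y, (volume : Measure ℝ) ((fun x => (x, y)) ⁻¹' (e '' F)) = 0 := by
    intro y
    rcases this y with h | ⟨t, ht⟩
    · simp [h]
    · exact measure_mono_null ht (measure_singleton t)
  simp [this]

lemma compl_posSet_null {X : Type*} [PseudoMetricSpace X] [SecondCountableTopology X]
    [MeasurableSpace X] [OpensMeasurableSpace X] (μ : Measure X) :
    μ ({p | ∀ ε : ℝ, 0 < ε → 0 < μ (Metric.ball p ε)}ᶜ) = 0 := by
  set S := {p | ∀ ε : ℝ, 0 < ε → 0 < μ (Metric.ball p ε)} with hS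
  have h : ∀ p ∈ Sᶜ, ∃ ε : ℝ, 0 < ε ∧ μ (Metric.ball p ε) = 0 := by
    intro p hp
    simp only [hS, mem_compl_iff, mem_setOf_eq, not_forall] at hp
    obtain ⟨ε, hε, hμ⟩ := hp
    exact ⟨ε, hε, by simpa [pos_iff_ne_zero] using hμ⟩
  choose! ε hε hμ using h
  have hnb : ∀ p ∈ Sᶜ, Metric.ball p (ε p) ∈ nhdsWithin p Sᶜ :=
    fun p hp => nhdsWithin_le_nhds (Metric.ball_mem_nhds p (hε p hp))
  obtain ⟨t, hts, htc, hcover⟩ := TopologicalSpace.countable_cover_nhdsWithin hnb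
  refine measure_mono_null hcover ?_
  exact (measure_biUnion_null_iff htc).2 fun p hp => hμ p (hts hp)

lemma isClosed_posSet {X : Type*} [PseudoMetricSpace X]
    [MeasurableSpace X] (μ : Measure X) :
    IsClosed {p | ∀ ε : ℝ, 0 < ε → 0 < μ (Metric.ball p ε)} := by
  rw [← isOpen_compl_iff]
  rw [Metric.isOpen_iff]
  intro p hp
  simp only [mem_compl_iff, mem_setOf_eq, not_forall] at hp
  obtain ⟨ε, hε, hμ⟩ := hp
  have hμ0 : μ (Metric.ball p ε) = 0 := by simpa [pos_iff_ne_zero] using hμ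
  refine ⟨ε / 2, by linarith, fun q hq => ?_⟩
  simp only [mem_compl_iff, mem_setOf_eq, not_forall]
  refine ⟨ε / 2, by linarith, ?_⟩
  have hsub : Metric.ball q (ε / 2) ⊆ Metric.ball p ε := by
    apply Metric.ball_subset_ball'
    have := Metric.mem_ball.1 hq
    linarith [this]
  simp [measure_mono_null hsub hμ0]

lemma inner_dev {E : Type*} [NormedAddCommGroup E] [InnerProductSpace ℝ E]
    (a b x y : E) (ε R : ℝ) (hx : dist x a < ε) (hy : dist y b < ε)
    (hε : 0 < ε) (hε1 : ε ≤ 1) (hR : ‖a‖ + ‖b‖ + 1 ≤ R) :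
    abs (⟪x, y⟫ - ⟪a, b⟫) ≤ ε * R := by
  have h1 : ⟪x, y⟫ - ⟪a, b⟫ = ⟪x - a, y⟫ + ⟪a, y - b⟫ := by
    rw [inner_sub_left, inner_sub_right]; ring
  have hxa : ‖x - a‖ ≤ ε := le_of_lt (by rwa [← dist_eq_norm])
  have hyb : ‖y - b‖ ≤ ε := le_of_lt (by rwa [← dist_eq_norm])
  have hny : ‖y‖ ≤ ‖b‖ + ε := by
    have := norm_sub_norm_le y b
    linarith
  calc abs (⟪x, y⟫ - ⟪a, b⟫) ≤ abs ⟪x - a, y⟫ + abs ⟪a, y - b⟫ := by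
        rw [h1]; exact abs_add_le _ _
    _ ≤ ‖x - a‖ * ‖y‖ + ‖a‖ * ‖y - b‖ := by
        gcongr <;> exact abs_real_inner_le_norm _ _
    _ ≤ ε * (‖b‖ + ε) + ‖a‖ * ε := by
        have h0 : (0:ℝ) ≤ ‖y‖ := norm_nonneg _
        gcongr
    _ ≤ ε * R := by nlinarith [norm_nonneg a, norm_nonneg b]

lemma monotone_closed_ae_single {d : ℕ}
    {M : Set (EuclideanSpace ℝ (Fin d) × EuclideanSpace ℝ (Fin d))}
    (hM : IsClosed M)
    (hmono : ∀ p ∈ M, ∀ q ∈ M, 0 ≤ ⟪p.1 - q.1, p.2 - q.2⟫) :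
    ∃ N : Set (EuclideanSpace ℝ (Fin d)), MeasurableSet N ∧ volume N = 0 ∧
      ∀ x ∉ N, ∀ y y', (x, y) ∈ M → (x, y') ∈ M → y = y' := by
  cases d with
  | zero =>
      exact ⟨∅, MeasurableSet.empty, measure_empty,
        fun x _ y y' _ _ => Subsingleton.elim y y'⟩
  | succ n =>
  set F : Fin (n+1) → ℚ → ℕ → Set (EuclideanSpace ℝ (Fin (n+1))) := fun i q k =>
    {x | ∃ y y', (x, y) ∈ M ∧ (x, y') ∈ M ∧ ‖y‖ ≤ (k:ℝ) ∧ ‖y'‖ ≤ (k:ℝ) ∧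
      (q:ℝ) + 1/((k:ℝ)+1) ≤ y i ∧ y' i ≤ (q:ℝ) - 1/((k:ℝ)+1)} with hF
  have hFclosed : ∀ i q k, IsClosed (F i q k) := by
    intro i q k
    apply IsSeqClosed.isClosed
    intro xs x hmem hlim
    choose y y' h1 h2 h3 h4 h5 h6 using hmem
    have hcpt : IsCompact ((Metric.closedBall (0 : EuclideanSpace ℝ (Fin (n+1))) k) ×ˢ (Metric.closedBall (0 : EuclideanSpace ℝ (Fin (n+1))) k)) :=
      (isCompact_closedBall _ _).prod (isCompact_closedBall _ _)
    have hmem2 : ∀ m, (y m, y' m) ∈ (Metric.closedBall (0 : EuclideanSpace ℝ (Fin (n+1))) k) ×ˢ (Metric.closedBall (0 : EuclideanSpace ℝ (Fin (n+1))) k) := by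
      intro m
      constructor <;> simp only [Metric.mem_closedBall, dist_zero_right]
      · exact h3 m
      · exact h4 m
    obtain ⟨⟨b, b'⟩, hbmem, φ, hφ, hconv⟩ := hcpt.tendsto_subseq hmem2
    have hxlim : Tendsto (fun m => xs (φ m)) atTop (𝓝 x) := hlim.comp hφ.tendsto_atTop
    have hby : Tendsto (fun m => y (φ m)) atTop (𝓝 b) :=
      (continuous_fst.tendsto _).comp hconv
    have hby' : Tendsto (fun m => y' (φ m)) atTop (𝓝 b') :=
      (continuous_snd.tendsto _).comp hconv
    have hbM : (x, b) ∈ M :=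
      hM.mem_of_tendsto (hxlim.prodMk_nhds hby) (Filter.Eventually.of_forall fun m => h1 (φ m))
    have hbM' : (x, b') ∈ M :=
      hM.mem_of_tendsto (hxlim.prodMk_nhds hby') (Filter.Eventually.of_forall fun m => h2 (φ m))
    have hnb : ‖b‖ ≤ (k:ℝ) := by
      have := hbmem.1; simpa only [Metric.mem_closedBall, dist_zero_right] using this
    have hnb' : ‖b'‖ ≤ (k:ℝ) := by
      have := hbmem.2; simpa only [Metric.mem_closedBall, dist_zero_right] using this
    have hproj : ∀ (_ : EuclideanSpace ℝ (Fin (n+1))), Tendsto (fun m => y (φ m) i) atTop (𝓝 (b i)) := by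
      intro _
      exact ((EuclideanSpace.proj (𝕜 := ℝ) i).continuous.tendsto b).comp hby
    have hbi : (q:ℝ) + 1/((k:ℝ)+1) ≤ b i :=
      ge_of_tendsto (hproj 0) (Filter.Eventually.of_forall fun m => h5 (φ m))
    have hproj' : Tendsto (fun m => y' (φ m) i) atTop (𝓝 (b' i)) :=
      ((EuclideanSpace.proj (𝕜 := ℝ) i).continuous.tendsto b').comp hby'
    have hbi' : b' i ≤ (q:ℝ) - 1/((k:ℝ)+1) :=
      le_of_tendsto hproj' (Filter.Eventually.of_forall fun m => h6 (φ m))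
    exact ⟨b, b', hbM, hbM', hnb, hnb', hbi, hbi'⟩
  have hinner : ∀ (u v : EuclideanSpace ℝ (Fin (n+1))), ⟪u, v⟫ = ∑ j, u j * v j := by
    intro u v
    simp [PiLp.inner_apply, RCLike.inner_apply, conj_trivial]
    exact Finset.sum_congr rfl fun _ _ => mul_comm _ _
  have hline : ∀ i q k, ∀ x ∈ F i q k, ∀ x' ∈ F i q k,
      (∀ j, j ≠ i → x j = x' j) → x = x' := by
    intro i q k x hx x' hx' hagree
    obtain ⟨y, y', hxy, hxy', hny, hny', hyi, hy'i⟩ := hx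
    obtain ⟨z, z', hxz, hxz', hnz, hnz', hzi, hz'i⟩ := hx'
    have hxixi : x i = x' i := by
      by_contra hi
      have hpos : (0:ℝ) < 1/((k:ℝ)+1) := by positivity
      have key : ∀ (a c : EuclideanSpace ℝ (Fin (n+1))), (x, a) ∈ M → (x', c) ∈ M →
          ⟪x - x', a - c⟫ = (x i - x' i) * (a i - c i) := by
        intro a c _ _
        rw [hinner]
        rw [Finset.sum_eq_single i]
        · simp [PiLp.sub_apply]
        · intro j _ hj
          have := hagree j hj
          simp [PiLp.sub_apply, this]
        · simp
      rcases lt_or_gt_of_ne hi with hlt | hgt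
      · have h0 := hmono (x, y) hxy (x', z') hxz'
        rw [key y z' hxy hxz'] at h0
        have : y i - z' i ≥ 2/((k:ℝ)+1) := by
          have h1 : (q:ℝ) + 1/((k:ℝ)+1) ≤ y i := hyi
          have h2 : z' i ≤ (q:ℝ) - 1/((k:ℝ)+1) := hz'i
          have : 2/((k:ℝ)+1) = 1/((k:ℝ)+1) + 1/((k:ℝ)+1) := by ring
          linarith
        nlinarith
      · have h0 := hmono (x, y') hxy' (x', z) hxz
        rw [key y' z hxy' hxz] at h0
        have : y' i - z i ≤ -(2/((k:ℝ)+1)) := by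
          have : 2/((k:ℝ)+1) = 1/((k:ℝ)+1) + 1/((k:ℝ)+1) := by ring
          linarith
        nlinarith
    ext j
    rcases eq_or_ne j i with rfl | hj
    · exact hxixi
    · exact hagree j hj
  have hFnull : ∀ i q k, volume (F i q k) = 0 := by
    intro i q k
    have hmeas : MeasurableSet (F i q k) := (hFclosed i q k).measurableSet
    set φ := (MeasurableEquiv.toLp 2 (Fin (n+1) → ℝ)).symm with hφ
    have hmp := EuclideanSpace.volume_preserving_symm_measurableEquiv_toLp (Fin (n+1))
    have himg : MeasurableSet (φ '' F i q k) := φ.measurableSet_image.2 hmeas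
    have h1 : volume (φ '' F i q k) = volume (F i q k) := by
      rw [← hmp.map_eq, MeasurableEquiv.map_apply, Set.preimage_image_eq _ φ.injective]
    rw [← h1]
    apply line_null i _ himg
    intro u hu v hv hagree
    obtain ⟨x, hx, rfl⟩ := hu
    obtain ⟨x', hx', rfl⟩ := hv
    have hc : ∀ (w : EuclideanSpace ℝ (Fin (n+1))) j, φ w j = w j := fun w j => rfl
    have : x = x' := by
      apply hline i q k x hx x' hx'
      intro j hj
      have := hagree j hj
      rwa [hc, hc] at this
    rw [this]
  refine ⟨⋃ i, ⋃ q : ℚ, ⋃ k : ℕ, F i q k,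
    MeasurableSet.iUnion fun i => MeasurableSet.iUnion fun q =>
      MeasurableSet.iUnion fun k => (hFclosed i q k).measurableSet,
    measure_iUnion_null fun i => measure_iUnion_null fun q =>
      measure_iUnion_null fun k => hFnull i q k, ?_⟩
  intro x hx y y' hy hy'
  by_contra hne
  have hex : ∃ i, y i ≠ y' i := by
    by_contra h
    push_neg at h
    exact hne (PiLp.ext h)
  obtain ⟨i, hi⟩ := hex
  have key : ∀ z z' : EuclideanSpace ℝ (Fin (n+1)), (x, z) ∈ M → (x, z') ∈ M → z' i < z i → False := by
    intro z z' hz hz' hlt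
    obtain ⟨q, hq1, hq2⟩ := exists_rat_btwn hlt
    obtain ⟨k₁, hk₁⟩ := exists_nat_gt (max ‖z‖ ‖z'‖)
    have hδ : 0 < min ((z i) - q) ((q:ℝ) - z' i) := lt_min (by linarith) (by linarith)
    obtain ⟨k₂, hk₂⟩ := exists_nat_one_div_lt hδ
    set k := max k₁ k₂ with hk
    have hkk : (1:ℝ)/((k:ℝ)+1) ≤ 1/((k₂:ℝ)+1) := by
      apply one_div_le_one_div_of_le
      · positivity
      · have : (k₂:ℝ) ≤ (k:ℝ) := by exact_mod_cast le_max_right k₁ k₂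
        linarith
    have hk1 : (k₁:ℝ) ≤ (k:ℝ) := by exact_mod_cast le_max_left k₁ k₂
    apply hx
    refine mem_iUnion.2 ⟨i, mem_iUnion.2 ⟨q, mem_iUnion.2 ⟨k, z, z', hz, hz', ?_, ?_, ?_, ?_⟩⟩⟩
    · have := le_max_left ‖z‖ ‖z'‖; linarith [hk₁.le]
    · have := le_max_right ‖z‖ ‖z'‖; linarith [hk₁.le]
    · have h2 : 1/((k₂:ℝ)+1) < z i - q := lt_of_lt_of_le hk₂ (min_le_left _ _)
      linarith
    · have h2 : 1/((k₂:ℝ)+1) < (q:ℝ) - z' i := lt_of_lt_of_le hk₂ (min_le_right _ _)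
      linarith
  rcases lt_or_gt_of_ne hi with hlt | hgt
  · exact key y' y hy' hy hlt
  · exact key y y' hy hy' hgt

lemma ball_measure_facts {d : ℕ}
    (ξ : Measure (EuclideanSpace ℝ (Fin d) × EuclideanSpace ℝ (Fin d)))
    [IsFiniteMeasure ξ] (a b : EuclideanSpace ℝ (Fin d)) (ε R : ℝ)
    (hε : 0 < ε) (hε1 : ε ≤ 1) (hab : ‖a‖ + ‖b‖ + 1 ≤ R)
    (hae : ∀ᵐ r ∂ξ, r ∈ Metric.ball a ε ×ˢ Metric.ball b ε) :
    Integrable (fun r => ‖r.1 - r.2‖ ^ 2) ξ ∧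
    Integrable (fun r => ‖r.1‖ ^ 2) ξ ∧
    Integrable (fun r => ‖r.2‖ ^ 2) ξ ∧
    Integrable (fun r => ⟪r.1, r.2⟫) ξ ∧
    (⟪a, b⟫ - ε * R) * (ξ univ).toReal ≤ ∫ r, ⟪r.1, r.2⟫ ∂ξ ∧
    ∫ r, ⟪r.1, r.2⟫ ∂ξ ≤ (⟪a, b⟫ + ε * R) * (ξ univ).toReal := by
  have hna : 0 ≤ ‖a‖ := norm_nonneg _
  have hnb : 0 ≤ ‖b‖ := norm_nonneg _
  have hR0 : 0 < R := by linarith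
  have hb1 : ∀ᵐ r ∂ξ, ‖r.1‖ ≤ R ∧ ‖r.2‖ ≤ R := by
    filter_upwards [hae] with r hr
    have h1 : dist r.1 a < ε := Metric.mem_ball.1 hr.1
    have h2 : dist r.2 b < ε := Metric.mem_ball.1 hr.2
    have e1 : ‖r.1‖ ≤ ‖a‖ + ε := by
      have := norm_sub_norm_le r.1 a
      rw [← dist_eq_norm] at this
      linarith
    have e2 : ‖r.2‖ ≤ ‖b‖ + ε := by
      have := norm_sub_norm_le r.2 b
      rw [← dist_eq_norm] at this
      linarith
    constructor <;> linarith
  have hinnerdev : ∀ᵐ r ∂ξ, abs (⟪r.1, r.2⟫ - ⟪a, b⟫) ≤ ε * R := by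
    filter_upwards [hae] with r hr
    exact inner_dev a b r.1 r.2 ε R (Metric.mem_ball.1 hr.1) (Metric.mem_ball.1 hr.2) hε hε1 hab
  have hcont1 : Continuous (fun r : EuclideanSpace ℝ (Fin d) × EuclideanSpace ℝ (Fin d) => ‖r.1 - r.2‖ ^ 2) :=
    ((continuous_fst.sub continuous_snd).norm.pow 2)
  have hcont2 : Continuous (fun r : EuclideanSpace ℝ (Fin d) × EuclideanSpace ℝ (Fin d) => ‖r.1‖ ^ 2) :=
    (continuous_fst.norm.pow 2)
  have hcont3 : Continuous (fun r : EuclideanSpace ℝ (Fin d) × EuclideanSpace ℝ (Fin d) => ‖r.2‖ ^ 2) :=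
    (continuous_snd.norm.pow 2)
  have hcont4 : Continuous (fun r : EuclideanSpace ℝ (Fin d) × EuclideanSpace ℝ (Fin d) => ⟪r.1, r.2⟫) :=
    continuous_inner
  have hi1 : Integrable (fun r => ‖r.1 - r.2‖ ^ 2) ξ := by
    apply (integrable_const ((2*R)^2)).mono' hcont1.aestronglyMeasurable
    filter_upwards [hb1] with r hr
    have h1 : ‖r.1 - r.2‖ ≤ 2 * R := by
      have := norm_sub_le r.1 r.2
      linarith [hr.1, hr.2]
    have h0 : (0:ℝ) ≤ ‖r.1 - r.2‖ := norm_nonneg _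
    rw [Real.norm_eq_abs, abs_of_nonneg (by positivity)]
    nlinarith
  have hi2 : Integrable (fun r => ‖r.1‖ ^ 2) ξ := by
    apply (integrable_const (R^2)).mono' hcont2.aestronglyMeasurable
    filter_upwards [hb1] with r hr
    rw [Real.norm_eq_abs, abs_of_nonneg (by positivity)]
    nlinarith [hr.1, norm_nonneg r.1]
  have hi3 : Integrable (fun r => ‖r.2‖ ^ 2) ξ := by
    apply (integrable_const (R^2)).mono' hcont3.aestronglyMeasurable
    filter_upwards [hb1] with r hr
    rw [Real.norm_eq_abs, abs_of_nonneg (by positivity)]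
    nlinarith [hr.2, norm_nonneg r.2]
  have hi4 : Integrable (fun r => ⟪r.1, r.2⟫) ξ := by
    apply (integrable_const (abs ⟪a, b⟫ + ε * R)).mono' hcont4.aestronglyMeasurable
    filter_upwards [hinnerdev] with r hr
    rw [Real.norm_eq_abs]
    have := abs_sub_abs_le_abs_sub ⟪r.1, r.2⟫ ⟪a, b⟫
    linarith
  refine ⟨hi1, hi2, hi3, hi4, ?_, ?_⟩
  · have h := integral_mono_ae (integrable_const (⟪a, b⟫ - ε * R)) hi4 ?_
    · rwa [integral_const, smul_eq_mul, mul_comm] at h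
    · filter_upwards [hinnerdev] with r hr
      have := abs_le.1 hr
      linarith [this.1]
  · have h := integral_mono_ae hi4 (integrable_const (⟪a, b⟫ + ε * R)) ?_
    · rwa [integral_const, smul_eq_mul, mul_comm] at h
    · filter_upwards [hinnerdev] with r hr
      have := abs_le.1 hr
      linarith [this.2]

set_option maxHeartbeats 2000000 in
lemma coupling_support_mono {d : ℕ}
    (γ : Measure (EuclideanSpace ℝ (Fin d) × EuclideanSpace ℝ (Fin d)))
    [IsProbabilityMeasure γ]
    (hint : Integrable (fun r => ‖r.1 - r.2‖ ^ 2) γ)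
    (hopt : ∀ γ' : Measure (EuclideanSpace ℝ (Fin d) × EuclideanSpace ℝ (Fin d)),
      IsProbabilityMeasure γ' → γ'.map Prod.fst = γ.map Prod.fst →
      γ'.map Prod.snd = γ.map Prod.snd →
      ∫ r, ‖r.1 - r.2‖ ^ 2 ∂γ ≤ ∫ r, ‖r.1 - r.2‖ ^ 2 ∂γ')
    (p q : EuclideanSpace ℝ (Fin d) × EuclideanSpace ℝ (Fin d))
    (hp : ∀ ε : ℝ, 0 < ε → 0 < γ (Metric.ball p ε))
    (hq : ∀ ε : ℝ, 0 < ε → 0 < γ (Metric.ball q ε)) :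
    0 ≤ ⟪p.1 - q.1, p.2 - q.2⟫ := by
  by_contra hneg
  push_neg at hneg
  set δ := -⟪p.1 - q.1, p.2 - q.2⟫ with hδdef
  have hδ : 0 < δ := by simp only [hδdef]; linarith
  have hpq : p ≠ q := by
    rintro rfl
    simp only [sub_self, inner_zero_left] at hneg
    exact lt_irrefl 0 hneg
  have hdpq : 0 < dist p q := dist_pos.2 hpq
  set R := ‖p.1‖ + ‖p.2‖ + ‖q.1‖ + ‖q.2‖ + 1 with hRdef
  have hR0 : 0 < R := by positivity
  set ε := min (min 1 (dist p q / 2)) (δ / (8 * R)) with hεdef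
  have hε0 : 0 < ε := lt_min (lt_min one_pos (by linarith)) (by positivity)
  have hε1 : ε ≤ 1 := le_trans (min_le_left _ _) (min_le_left _ _)
  have hεd : ε ≤ dist p q / 2 := le_trans (min_le_left _ _) (min_le_right _ _)
  have hεδ : ε ≤ δ / (8 * R) := min_le_right _ _
  set A₁ := Metric.ball p ε with hA₁def
  set A₂ := Metric.ball q ε with hA₂def
  have hA₁eq : A₁ = Metric.ball p.1 ε ×ˢ Metric.ball p.2 ε := by
    rw [hA₁def, ← ball_prod_same]
  have hA₂eq : A₂ = Metric.ball q.1 ε ×ˢ Metric.ball q.2 ε := by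
    rw [hA₂def, ← ball_prod_same]
  have hA₁m : MeasurableSet A₁ := Metric.isOpen_ball.measurableSet
  have hA₂m : MeasurableSet A₂ := Metric.isOpen_ball.measurableSet
  have hdisj : Disjoint A₁ A₂ := by
    apply Metric.ball_disjoint_ball
    linarith
  set B := A₁ ∪ A₂ with hBdef
  have hBm : MeasurableSet B := hA₁m.union hA₂m
  set ρ₁ := γ.restrict A₁ with hρ₁def
  set ρ₂ := γ.restrict A₂ with hρ₂def
  set m₁ := γ A₁ with hm₁def
  set m₂ := γ A₂ with hm₂def
  have hm₁pos : 0 < m₁ := hp ε hε0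
  have hm₂pos : 0 < m₂ := hq ε hε0
  have hm₁le : m₁ ≤ 1 := prob_le_one
  have hm₂le : m₂ ≤ 1 := prob_le_one
  have hm₁top : m₁ ≠ ∞ := (lt_of_le_of_lt hm₁le ENNReal.one_lt_top).ne
  have hm₂top : m₂ ≠ ∞ := (lt_of_le_of_lt hm₂le ENNReal.one_lt_top).ne
  set μ₁ := ρ₁.map Prod.fst with hμ₁def
  set ν₁ := ρ₁.map Prod.snd with hν₁def
  set μ₂ := ρ₂.map Prod.fst with hμ₂def
  set ν₂ := ρ₂.map Prod.snd with hν₂def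
  have hρ₁univ : ρ₁ univ = m₁ := by rw [hρ₁def, Measure.restrict_apply_univ]
  have hρ₂univ : ρ₂ univ = m₂ := by rw [hρ₂def, Measure.restrict_apply_univ]
  have hμ₁univ : μ₁ univ = m₁ := by
    rw [hμ₁def, Measure.map_apply measurable_fst MeasurableSet.univ, preimage_univ, hρ₁def,
      Measure.restrict_apply_univ]
  have hν₁univ : ν₁ univ = m₁ := by
    rw [hν₁def, Measure.map_apply measurable_snd MeasurableSet.univ, preimage_univ, hρ₁def,
      Measure.restrict_apply_univ]
  have hμ₂univ : μ₂ univ = m₂ := by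
    rw [hμ₂def, Measure.map_apply measurable_fst MeasurableSet.univ, preimage_univ, hρ₂def,
      Measure.restrict_apply_univ]
  have hν₂univ : ν₂ univ = m₂ := by
    rw [hν₂def, Measure.map_apply measurable_snd MeasurableSet.univ, preimage_univ, hρ₂def,
      Measure.restrict_apply_univ]
  haveI : IsFiniteMeasure ρ₁ := inferInstance
  haveI : IsFiniteMeasure ρ₂ := inferInstance
  haveI : IsFiniteMeasure μ₁ := Measure.isFiniteMeasure_map _ _
  haveI : IsFiniteMeasure ν₁ := Measure.isFiniteMeasure_map _ _
  haveI : IsFiniteMeasure μ₂ := Measure.isFiniteMeasure_map _ _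
  haveI : IsFiniteMeasure ν₂ := Measure.isFiniteMeasure_map _ _
  set π₁₂ := μ₁.prod ν₂ with hπ₁₂def
  set π₂₁ := μ₂.prod ν₁ with hπ₂₁def
  -- a.e. membership facts
  have hae₁ : ∀ᵐ r ∂ρ₁, r ∈ Metric.ball p.1 ε ×ˢ Metric.ball p.2 ε := by
    rw [← hA₁eq]
    exact ae_restrict_mem hA₁m
  have hae₂ : ∀ᵐ r ∂ρ₂, r ∈ Metric.ball q.1 ε ×ˢ Metric.ball q.2 ε := by
    rw [← hA₂eq]
    exact ae_restrict_mem hA₂m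
  have hμ₁c : μ₁ ((Metric.ball p.1 ε)ᶜ) = 0 := by
    rw [hμ₁def, Measure.map_apply measurable_fst Metric.isOpen_ball.measurableSet.compl,
      hρ₁def, Measure.restrict_apply (measurable_fst Metric.isOpen_ball.measurableSet.compl)]
    apply measure_mono_null (t := (∅ : Set _)) _ measure_empty
    intro r hr
    rcases hr with ⟨hr1, hr2⟩
    rw [hA₁eq] at hr2
    exact (hr1 hr2.1).elim
  have hμ₂c : μ₂ ((Metric.ball q.1 ε)ᶜ) = 0 := by
    rw [hμ₂def, Measure.map_apply measurable_fst Metric.isOpen_ball.measurableSet.compl,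
      hρ₂def, Measure.restrict_apply (measurable_fst Metric.isOpen_ball.measurableSet.compl)]
    apply measure_mono_null (t := (∅ : Set _)) _ measure_empty
    intro r hr
    rcases hr with ⟨hr1, hr2⟩
    rw [hA₂eq] at hr2
    exact (hr1 hr2.1).elim
  have hν₁c : ν₁ ((Metric.ball p.2 ε)ᶜ) = 0 := by
    rw [hν₁def, Measure.map_apply measurable_snd Metric.isOpen_ball.measurableSet.compl,
      hρ₁def, Measure.restrict_apply (measurable_snd Metric.isOpen_ball.measurableSet.compl)]
    apply measure_mono_null (t := (∅ : Set _)) _ measure_empty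
    intro r hr
    rcases hr with ⟨hr1, hr2⟩
    rw [hA₁eq] at hr2
    exact (hr1 hr2.2).elim
  have hν₂c : ν₂ ((Metric.ball q.2 ε)ᶜ) = 0 := by
    rw [hν₂def, Measure.map_apply measurable_snd Metric.isOpen_ball.measurableSet.compl,
      hρ₂def, Measure.restrict_apply (measurable_snd Metric.isOpen_ball.measurableSet.compl)]
    apply measure_mono_null (t := (∅ : Set _)) _ measure_empty
    intro r hr
    rcases hr with ⟨hr1, hr2⟩
    rw [hA₂eq] at hr2
    exact (hr1 hr2.2).elim
  have haeπ₁₂ : ∀ᵐ r ∂π₁₂, r ∈ Metric.ball p.1 ε ×ˢ Metric.ball q.2 ε := by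
    rw [ae_iff]
    apply measure_mono_null (t := ((Metric.ball p.1 ε)ᶜ ×ˢ univ) ∪ (univ ×ˢ (Metric.ball q.2 ε)ᶜ))
    · intro r hr
      simp only [mem_setOf_eq, mem_prod] at hr
      push_neg at hr
      by_cases h1 : r.1 ∈ Metric.ball p.1 ε
      · exact Or.inr ⟨mem_univ _, hr h1⟩
      · exact Or.inl ⟨h1, mem_univ _⟩
    · apply measure_union_null
      · rw [hπ₁₂def, Measure.prod_prod, hμ₁c, zero_mul]
      · rw [hπ₁₂def, Measure.prod_prod, hν₂c, mul_zero]
  have haeπ₂₁ : ∀ᵐ r ∂π₂₁, r ∈ Metric.ball q.1 ε ×ˢ Metric.ball p.2 ε := by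
    rw [ae_iff]
    apply measure_mono_null (t := ((Metric.ball q.1 ε)ᶜ ×ˢ univ) ∪ (univ ×ˢ (Metric.ball p.2 ε)ᶜ))
    · intro r hr
      simp only [mem_setOf_eq, mem_prod] at hr
      push_neg at hr
      by_cases h1 : r.1 ∈ Metric.ball q.1 ε
      · exact Or.inr ⟨mem_univ _, hr h1⟩
      · exact Or.inl ⟨h1, mem_univ _⟩
    · apply measure_union_null
      · rw [hπ₂₁def, Measure.prod_prod, hμ₂c, zero_mul]
      · rw [hπ₂₁def, Measure.prod_prod, hν₁c, mul_zero]
  -- norm bound hypotheses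
  have hab₁ : ‖p.1‖ + ‖p.2‖ + 1 ≤ R := by
    rw [hRdef]; have := norm_nonneg q.1; have := norm_nonneg q.2; linarith
  have hab₂ : ‖q.1‖ + ‖q.2‖ + 1 ≤ R := by
    rw [hRdef]; have := norm_nonneg p.1; have := norm_nonneg p.2; linarith
  have hab₁₂ : ‖p.1‖ + ‖q.2‖ + 1 ≤ R := by
    rw [hRdef]; have := norm_nonneg q.1; have := norm_nonneg p.2; linarith
  have hab₂₁ : ‖q.1‖ + ‖p.2‖ + 1 ≤ R := by
    rw [hRdef]; have := norm_nonneg p.1; have := norm_nonneg q.2; linarith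
  obtain ⟨hcρ₁, hn1ρ₁, hn2ρ₁, hiρ₁, hloρ₁, hhiρ₁⟩ :=
    ball_measure_facts ρ₁ p.1 p.2 ε R hε0 hε1 hab₁ hae₁
  obtain ⟨hcρ₂, hn1ρ₂, hn2ρ₂, hiρ₂, hloρ₂, hhiρ₂⟩ :=
    ball_measure_facts ρ₂ q.1 q.2 ε R hε0 hε1 hab₂ hae₂
  obtain ⟨hcπ₁₂, hn1π₁₂, hn2π₁₂, hiπ₁₂, hloπ₁₂, hhiπ₁₂⟩ :=
    ball_measure_facts π₁₂ p.1 q.2 ε R hε0 hε1 hab₁₂ haeπ₁₂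
  obtain ⟨hcπ₂₁, hn1π₂₁, hn2π₂₁, hiπ₂₁, hloπ₂₁, hhiπ₂₁⟩ :=
    ball_measure_facts π₂₁ q.1 p.2 ε R hε0 hε1 hab₂₁ haeπ₂₁
  -- mapping identities
  have hmapπ₁₂fst : π₁₂.map Prod.fst = m₂ • μ₁ := by
    rw [hπ₁₂def, Measure.map_fst_prod, hν₂univ]
  have hmapπ₁₂snd : π₁₂.map Prod.snd = m₁ • ν₂ := by
    rw [hπ₁₂def, Measure.map_snd_prod, hμ₁univ]
  have hmapπ₂₁fst : π₂₁.map Prod.fst = m₁ • μ₂ := by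
    rw [hπ₂₁def, Measure.map_fst_prod, hν₁univ]
  have hmapπ₂₁snd : π₂₁.map Prod.snd = m₂ • ν₁ := by
    rw [hπ₂₁def, Measure.map_snd_prod, hμ₂univ]
  -- integral transfer helper
  have hmsi : ∀ (ξ σ : Measure (EuclideanSpace ℝ (Fin d) × EuclideanSpace ℝ (Fin d)))
      (φ : EuclideanSpace ℝ (Fin d) × EuclideanSpace ℝ (Fin d) → EuclideanSpace ℝ (Fin d))
      (_ : Measurable φ) (c : ℝ≥0∞) (g : EuclideanSpace ℝ (Fin d) → ℝ) (_ : Continuous g)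
      (_ : ξ.map φ = c • (σ.map φ)),
      ∫ r, g (φ r) ∂ξ = c.toReal * ∫ r, g (φ r) ∂σ := by
    intro ξ σ φ hφ c g hg h
    rw [← integral_map hφ.aemeasurable hg.aestronglyMeasurable, h, integral_smul_measure,
      integral_map hφ.aemeasurable hg.aestronglyMeasurable, smul_eq_mul]
  have hgn : Continuous (fun x : EuclideanSpace ℝ (Fin d) => ‖x‖ ^ 2) := (continuous_norm.pow 2)
  have hq1 : ∫ r, ‖r.1‖ ^ 2 ∂π₁₂ = m₂.toReal * ∫ r, ‖r.1‖ ^ 2 ∂ρ₁ :=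
    hmsi π₁₂ ρ₁ Prod.fst measurable_fst m₂ _ hgn (by rw [hmapπ₁₂fst, hμ₁def])
  have hq2 : ∫ r, ‖r.2‖ ^ 2 ∂π₁₂ = m₁.toReal * ∫ r, ‖r.2‖ ^ 2 ∂ρ₂ :=
    hmsi π₁₂ ρ₂ Prod.snd measurable_snd m₁ _ hgn (by rw [hmapπ₁₂snd, hν₂def])
  have hq3 : ∫ r, ‖r.1‖ ^ 2 ∂π₂₁ = m₁.toReal * ∫ r, ‖r.1‖ ^ 2 ∂ρ₂ :=
    hmsi π₂₁ ρ₂ Prod.fst measurable_fst m₁ _ hgn (by rw [hmapπ₂₁fst, hμ₂def])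
  have hq4 : ∫ r, ‖r.2‖ ^ 2 ∂π₂₁ = m₂.toReal * ∫ r, ‖r.2‖ ^ 2 ∂ρ₁ :=
    hmsi π₂₁ ρ₁ Prod.snd measurable_snd m₂ _ hgn (by rw [hmapπ₂₁snd, hν₁def])
  -- decomposition of γ
  have hrestr : ρ₁ + ρ₂ = γ.restrict B := by
    rw [hρ₁def, hρ₂def, hBdef, Measure.restrict_union hdisj hA₂m]
  have hdecomp : γ.restrict Bᶜ + (ρ₁ + ρ₂) = γ := by
    rw [hrestr]
    exact Measure.restrict_compl_add_restrict hBm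
  have hsub1top : ∀ c : ℝ≥0∞, (1 - c) ≠ ∞ := fun c =>
      (lt_of_le_of_lt tsub_le_self ENNReal.one_lt_top).ne
  set γ' := γ.restrict Bᶜ + ((1 - m₂) • ρ₁ + ((1 - m₁) • ρ₂ + (π₁₂ + π₂₁))) with hγ'def
  have hcomb : ∀ (c : ℝ≥0∞), c ≤ 1 → ∀ (μ : Measure (EuclideanSpace ℝ (Fin d))),
      (1 - c) • μ + c • μ = μ := by
    intro c hc μ
    rw [← add_smul, tsub_add_cancel_of_le hc, one_smul]
  have hfst : γ'.map Prod.fst = γ.map Prod.fst := by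
    have h1 : γ'.map Prod.fst = (γ.restrict Bᶜ).map Prod.fst +
        ((1 - m₂) • μ₁ + ((1 - m₁) • μ₂ + (m₂ • μ₁ + m₁ • μ₂))) := by
      rw [hγ'def, Measure.map_add _ _ measurable_fst, Measure.map_add _ _ measurable_fst,
        Measure.map_add _ _ measurable_fst, Measure.map_add _ _ measurable_fst,
        Measure.map_smul, Measure.map_smul, hmapπ₁₂fst, hmapπ₂₁fst, hμ₁def, hμ₂def]
    rw [h1]
    conv_rhs => rw [← hdecomp]
    rw [Measure.map_add _ _ measurable_fst, Measure.map_add _ _ measurable_fst]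
    congr 1
    calc (1 - m₂) • μ₁ + ((1 - m₁) • μ₂ + (m₂ • μ₁ + m₁ • μ₂))
        = ((1 - m₂) • μ₁ + m₂ • μ₁) + ((1 - m₁) • μ₂ + m₁ • μ₂) := by abel
      _ = μ₁ + μ₂ := by rw [hcomb m₂ hm₂le μ₁, hcomb m₁ hm₁le μ₂]
      _ = ρ₁.map Prod.fst + ρ₂.map Prod.fst := by rw [hμ₁def, hμ₂def]
  have hsnd : γ'.map Prod.snd = γ.map Prod.snd := by
    have h1 : γ'.map Prod.snd = (γ.restrict Bᶜ).map Prod.snd +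
        ((1 - m₂) • ν₁ + ((1 - m₁) • ν₂ + (m₁ • ν₂ + m₂ • ν₁))) := by
      rw [hγ'def, Measure.map_add _ _ measurable_snd, Measure.map_add _ _ measurable_snd,
        Measure.map_add _ _ measurable_snd, Measure.map_add _ _ measurable_snd,
        Measure.map_smul, Measure.map_smul, hmapπ₁₂snd, hmapπ₂₁snd, hν₁def, hν₂def]
    rw [h1]
    conv_rhs => rw [← hdecomp]
    rw [Measure.map_add _ _ measurable_snd, Measure.map_add _ _ measurable_snd]
    congr 1
    calc (1 - m₂) • ν₁ + ((1 - m₁) • ν₂ + (m₁ • ν₂ + m₂ • ν₁))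
        = ((1 - m₂) • ν₁ + m₂ • ν₁) + ((1 - m₁) • ν₂ + m₁ • ν₂) := by abel
      _ = ν₁ + ν₂ := by rw [hcomb m₂ hm₂le ν₁, hcomb m₁ hm₁le ν₂]
      _ = ρ₁.map Prod.snd + ρ₂.map Prod.snd := by rw [hν₁def, hν₂def]
  have hγ'prob : IsProbabilityMeasure γ' := by
    constructor
    have h1 : γ' univ = (γ'.map Prod.fst) univ := by
      rw [Measure.map_apply measurable_fst MeasurableSet.univ, preimage_univ]
    rw [h1, hfst, Measure.map_apply measurable_fst MeasurableSet.univ, preimage_univ]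
    exact measure_univ
  have hintrest : Integrable (fun r => ‖r.1 - r.2‖ ^ 2) (γ.restrict Bᶜ) := hint.restrict
  have hintsm1 : Integrable (fun r => ‖r.1 - r.2‖ ^ 2) ((1 - m₂) • ρ₁) :=
    hcρ₁.smul_measure (hsub1top m₂)
  have hintsm2 : Integrable (fun r => ‖r.1 - r.2‖ ^ 2) ((1 - m₁) • ρ₂) :=
    hcρ₂.smul_measure (hsub1top m₁)
  have hintππ : Integrable (fun r => ‖r.1 - r.2‖ ^ 2) (π₁₂ + π₂₁) :=
    hcπ₁₂.add_measure hcπ₂₁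
  have hintrhs2 : Integrable (fun r => ‖r.1 - r.2‖ ^ 2) ((1 - m₁) • ρ₂ + (π₁₂ + π₂₁)) :=
    hintsm2.add_measure hintππ
  have hintrhs : Integrable (fun r => ‖r.1 - r.2‖ ^ 2)
      ((1 - m₂) • ρ₁ + ((1 - m₁) • ρ₂ + (π₁₂ + π₂₁))) :=
    hintsm1.add_measure hintrhs2
  have hsubtoReal : ∀ c : ℝ≥0∞, c ≤ 1 → (1 - c).toReal = 1 - c.toReal := by
    intro c hc
    rw [ENNReal.toReal_sub_of_le hc ENNReal.one_ne_top, ENNReal.toReal_one]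
  have hcostγ' : ∫ r, ‖r.1 - r.2‖ ^ 2 ∂γ' =
      ∫ r, ‖r.1 - r.2‖ ^ 2 ∂(γ.restrict Bᶜ) +
      ((1 - m₂.toReal) * ∫ r, ‖r.1 - r.2‖ ^ 2 ∂ρ₁ +
       ((1 - m₁.toReal) * ∫ r, ‖r.1 - r.2‖ ^ 2 ∂ρ₂ +
        (∫ r, ‖r.1 - r.2‖ ^ 2 ∂π₁₂ + ∫ r, ‖r.1 - r.2‖ ^ 2 ∂π₂₁))) := by
    rw [hγ'def, integral_add_measure hintrest hintrhs,
      integral_add_measure hintsm1 hintrhs2,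
      integral_add_measure hintsm2 hintππ,
      integral_add_measure hcπ₁₂ hcπ₂₁,
      integral_smul_measure, integral_smul_measure,
      hsubtoReal m₂ hm₂le, hsubtoReal m₁ hm₁le, smul_eq_mul, smul_eq_mul]
  have hcostγ : ∫ r, ‖r.1 - r.2‖ ^ 2 ∂γ =
      ∫ r, ‖r.1 - r.2‖ ^ 2 ∂(γ.restrict Bᶜ) +
      (∫ r, ‖r.1 - r.2‖ ^ 2 ∂ρ₁ + ∫ r, ‖r.1 - r.2‖ ^ 2 ∂ρ₂) := by
    conv_lhs => rw [← hdecomp]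
    rw [integral_add_measure hintrest (hcρ₁.add_measure hcρ₂),
      integral_add_measure hcρ₁ hcρ₂]
  have hle := hopt γ' hγ'prob hfst hsnd
  rw [hcostγ', hcostγ] at hle
  have hsplit : ∀ ξ : Measure (EuclideanSpace ℝ (Fin d) × EuclideanSpace ℝ (Fin d)),
      Integrable (fun r => ‖r.1‖ ^ 2) ξ → Integrable (fun r => ‖r.2‖ ^ 2) ξ →
      Integrable (fun r => ⟪r.1, r.2⟫) ξ →
      ∫ r, ‖r.1 - r.2‖ ^ 2 ∂ξ =
        ∫ r, ‖r.1‖ ^ 2 ∂ξ + ∫ r, ‖r.2‖ ^ 2 ∂ξ - 2 * ∫ r, ⟪r.1, r.2⟫ ∂ξ := by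
    intro ξ h1 h2 h3
    have heq : (fun r : EuclideanSpace ℝ (Fin d) × EuclideanSpace ℝ (Fin d) => ‖r.1 - r.2‖ ^ 2)
        = fun r => ‖r.1‖ ^ 2 + ‖r.2‖ ^ 2 - 2 * ⟪r.1, r.2⟫ := by
      funext r
      rw [@norm_sub_sq_real]
      ring
    have h12 : Integrable (fun r : EuclideanSpace ℝ (Fin d) × EuclideanSpace ℝ (Fin d) =>
        ‖r.1‖ ^ 2 + ‖r.2‖ ^ 2) ξ := h1.add h2
    have h32 : Integrable (fun r : EuclideanSpace ℝ (Fin d) × EuclideanSpace ℝ (Fin d) =>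
        2 * ⟪r.1, r.2⟫) ξ := h3.const_mul 2
    rw [heq, integral_sub h12 h32, integral_add h1 h2, MeasureTheory.integral_const_mul]
  rw [hsplit ρ₁ hn1ρ₁ hn2ρ₁ hiρ₁, hsplit ρ₂ hn1ρ₂ hn2ρ₂ hiρ₂,
    hsplit π₁₂ hn1π₁₂ hn2π₁₂ hiπ₁₂, hsplit π₂₁ hn1π₂₁ hn2π₂₁ hiπ₂₁,
    hq1, hq2, hq3, hq4] at hle
  have hm₁R : 0 < m₁.toReal := ENNReal.toReal_pos hm₁pos.ne' hm₁top
  have hm₂R : 0 < m₂.toReal := ENNReal.toReal_pos hm₂pos.ne' hm₂top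
  have hπ₁₂univ : (π₁₂ univ).toReal = m₁.toReal * m₂.toReal := by
    rw [hπ₁₂def, ← univ_prod_univ, Measure.prod_prod, hμ₁univ, hν₂univ, ENNReal.toReal_mul]
  have hπ₂₁univ : (π₂₁ univ).toReal = m₁.toReal * m₂.toReal := by
    rw [hπ₂₁def, ← univ_prod_univ, Measure.prod_prod, hμ₂univ, hν₁univ, ENNReal.toReal_mul,
      mul_comm]
  rw [hρ₁univ] at hhiρ₁
  rw [hρ₂univ] at hhiρ₂
  rw [hπ₁₂univ] at hloπ₁₂
  rw [hπ₂₁univ] at hloπ₂₁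
  have hkey : ∫ r, ⟪r.1, r.2⟫ ∂π₁₂ + ∫ r, ⟪r.1, r.2⟫ ∂π₂₁ ≤
      m₂.toReal * ∫ r, ⟪r.1, r.2⟫ ∂ρ₁ + m₁.toReal * ∫ r, ⟪r.1, r.2⟫ ∂ρ₂ := by
    nlinarith [hle]
  have hident : ⟪p.1 - q.1, p.2 - q.2⟫ =
      ⟪p.1, p.2⟫ - ⟪p.1, q.2⟫ - ⟪q.1, p.2⟫ + ⟪q.1, q.2⟫ := by
    rw [inner_sub_left, inner_sub_right, inner_sub_right]
    ring
  have h8 : ε * (8 * R) ≤ δ := by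
    calc ε * (8 * R) ≤ (δ / (8 * R)) * (8 * R) :=
          mul_le_mul_of_nonneg_right hεδ (by positivity)
      _ = δ := by field_simp
  have hb1 : m₂.toReal * ∫ r, ⟪r.1, r.2⟫ ∂ρ₁ ≤
      m₂.toReal * ((⟪p.1, p.2⟫ + ε * R) * m₁.toReal) :=
    mul_le_mul_of_nonneg_left hhiρ₁ ENNReal.toReal_nonneg
  have hb2 : m₁.toReal * ∫ r, ⟪r.1, r.2⟫ ∂ρ₂ ≤
      m₁.toReal * ((⟪q.1, q.2⟫ + ε * R) * m₂.toReal) :=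
    mul_le_mul_of_nonneg_left hhiρ₂ ENNReal.toReal_nonneg
  have hfinal : (⟪p.1, q.2⟫ - ε * R) * (m₁.toReal * m₂.toReal) +
      (⟪q.1, p.2⟫ - ε * R) * (m₁.toReal * m₂.toReal) ≤
      (⟪p.1, p.2⟫ + ε * R) * (m₁.toReal * m₂.toReal) +
      (⟪q.1, q.2⟫ + ε * R) * (m₁.toReal * m₂.toReal) := by
    calc (⟪p.1, q.2⟫ - ε * R) * (m₁.toReal * m₂.toReal) +
        (⟪q.1, p.2⟫ - ε * R) * (m₁.toReal * m₂.toReal)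
        ≤ ∫ r, ⟪r.1, r.2⟫ ∂π₁₂ + ∫ r, ⟪r.1, r.2⟫ ∂π₂₁ := add_le_add hloπ₁₂ hloπ₂₁
      _ ≤ m₂.toReal * ∫ r, ⟪r.1, r.2⟫ ∂ρ₁ + m₁.toReal * ∫ r, ⟪r.1, r.2⟫ ∂ρ₂ := hkey
      _ ≤ m₂.toReal * ((⟪p.1, p.2⟫ + ε * R) * m₁.toReal) +
          m₁.toReal * ((⟪q.1, q.2⟫ + ε * R) * m₂.toReal) := add_le_add hb1 hb2
      _ = (⟪p.1, p.2⟫ + ε * R) * (m₁.toReal * m₂.toReal) +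
          (⟪q.1, q.2⟫ + ε * R) * (m₁.toReal * m₂.toReal) := by ring
  have hm : 0 < m₁.toReal * m₂.toReal := mul_pos hm₁R hm₂R
  have hcore : ⟪p.1, q.2⟫ + ⟪q.1, p.2⟫ - ⟪p.1, p.2⟫ - ⟪q.1, q.2⟫ ≤ 4 * (ε * R) := by
    nlinarith [hfinal, hm]
  have hδeq : δ = ⟪p.1, q.2⟫ + ⟪q.1, p.2⟫ - ⟪p.1, p.2⟫ - ⟪q.1, q.2⟫ := by
    rw [hδdef, hident]
    ring
  have hεR : 0 < ε * R := by positivity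
  linarith [hδeq, hcore, h8]


/-- uniqueness of the optimal quadratic transport map: if `P₁`
and `P₂` are Borel probability measures on `ℝ^d` with finite second moments,
`P₁` absolutely continuous w.r.t. Lebesgue measure, and `T`, `T'` are Borel
maps each pushing `P₁` forward to `P₂` and each optimal for the quadratic cost
(their transport costs are equal and both are at most the cost of any coupling
of `(P₁, P₂)`), then `T = T'` `P₁`-almost everywhere. -/
theorem optimal_quadratic_transport_unique
    (d : ℕ)
    (P₁ P₂ : Measure (EuclideanSpace ℝ (Fin d)))
    [IsProbabilityMeasure P₁] [IsProbabilityMeasure P₂]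
    (hm₁ : Integrable (fun x : EuclideanSpace ℝ (Fin d) => ‖x‖ ^ 2) P₁)
    (hm₂ : Integrable (fun x : EuclideanSpace ℝ (Fin d) => ‖x‖ ^ 2) P₂)
    (hac : P₁ ≪ (volume : Measure (EuclideanSpace ℝ (Fin d))))
    (T T' : EuclideanSpace ℝ (Fin d) → EuclideanSpace ℝ (Fin d))
    (hT : Measurable T) (hT' : Measurable T')
    (hpush : P₁.map T = P₂) (hpush' : P₁.map T' = P₂)
    (hcost : ∫ x, ‖x - T x‖ ^ 2 ∂P₁ = ∫ x, ‖x - T' x‖ ^ 2 ∂P₁)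
    (hopt : ∀ γ : Measure (EuclideanSpace ℝ (Fin d) × EuclideanSpace ℝ (Fin d)),
      IsProbabilityMeasure γ →
      γ.map Prod.fst = P₁ → γ.map Prod.snd = P₂ →
      ∫ x, ‖x - T x‖ ^ 2 ∂P₁ ≤ ∫ p, ‖p.1 - p.2‖ ^ 2 ∂γ)
    (hopt' : ∀ γ : Measure (EuclideanSpace ℝ (Fin d) × EuclideanSpace ℝ (Fin d)),
      IsProbabilityMeasure γ →
      γ.map Prod.fst = P₁ → γ.map Prod.snd = P₂ →
      ∫ x, ‖x - T' x‖ ^ 2 ∂P₁ ≤ ∫ p, ‖p.1 - p.2‖ ^ 2 ∂γ) :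
    P₁ {x : EuclideanSpace ℝ (Fin d) | T x ≠ T' x} = 0 := by
  classical
  set g₁ : EuclideanSpace ℝ (Fin d) → EuclideanSpace ℝ (Fin d) × EuclideanSpace ℝ (Fin d) :=
    fun x => (x, T x) with hg₁def
  set g₂ : EuclideanSpace ℝ (Fin d) → EuclideanSpace ℝ (Fin d) × EuclideanSpace ℝ (Fin d) :=
    fun x => (x, T' x) with hg₂def
  have hmg₁ : Measurable g₁ := measurable_id.prodMk hT
  have hmg₂ : Measurable g₂ := measurable_id.prodMk hT'
  set γ₁ := P₁.map g₁ with hγ₁def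
  set γ₂ := P₁.map g₂ with hγ₂def
  haveI : IsProbabilityMeasure γ₁ := Measure.isProbabilityMeasure_map hmg₁.aemeasurable
  haveI : IsProbabilityMeasure γ₂ := Measure.isProbabilityMeasure_map hmg₂.aemeasurable
  set γb := (2⁻¹ : ℝ≥0∞) • γ₁ + (2⁻¹ : ℝ≥0∞) • γ₂ with hγbdef
  have h2invtop : (2⁻¹ : ℝ≥0∞) ≠ ∞ := by simp
  haveI : IsProbabilityMeasure γb := by
    constructor
    simp only [hγbdef, Measure.add_apply, Measure.smul_apply, measure_univ, smul_eq_mul,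
      mul_one]
    exact ENNReal.inv_two_add_inv_two
  have hfst₁ : γ₁.map Prod.fst = P₁ := by
    rw [hγ₁def, Measure.map_map measurable_fst hmg₁]
    have : Prod.fst ∘ g₁ = id := rfl
    rw [this, Measure.map_id]
  have hfst₂ : γ₂.map Prod.fst = P₁ := by
    rw [hγ₂def, Measure.map_map measurable_fst hmg₂]
    have : Prod.fst ∘ g₂ = id := rfl
    rw [this, Measure.map_id]
  have hsnd₁ : γ₁.map Prod.snd = P₂ := by
    rw [hγ₁def, Measure.map_map measurable_snd hmg₁]
    have : Prod.snd ∘ g₁ = T := rfl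
    rw [this, hpush]
  have hsnd₂ : γ₂.map Prod.snd = P₂ := by
    rw [hγ₂def, Measure.map_map measurable_snd hmg₂]
    have : Prod.snd ∘ g₂ = T' := rfl
    rw [this, hpush']
  have hhalf : ∀ μ : Measure (EuclideanSpace ℝ (Fin d)),
      (2⁻¹ : ℝ≥0∞) • μ + (2⁻¹ : ℝ≥0∞) • μ = μ := by
    intro μ
    rw [← add_smul, ENNReal.inv_two_add_inv_two, one_smul]
  have hfstγb : γb.map Prod.fst = P₁ := by
    rw [hγbdef, Measure.map_add _ _ measurable_fst, Measure.map_smul, Measure.map_smul,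
      hfst₁, hfst₂, hhalf]
  have hsndγb : γb.map Prod.snd = P₂ := by
    rw [hγbdef, Measure.map_add _ _ measurable_snd, Measure.map_smul, Measure.map_smul,
      hsnd₁, hsnd₂]
    have : ∀ μ : Measure (EuclideanSpace ℝ (Fin d)),
        (2⁻¹ : ℝ≥0∞) • μ + (2⁻¹ : ℝ≥0∞) • μ = μ := hhalf
    exact this P₂
  -- integrabilities
  have hcont : Continuous
      (fun r : EuclideanSpace ℝ (Fin d) × EuclideanSpace ℝ (Fin d) => ‖r.1 - r.2‖ ^ 2) :=
    ((continuous_fst.sub continuous_snd).norm.pow 2)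
  have hTsq : Integrable (fun x => ‖T x‖ ^ 2) P₁ := by
    have h := hm₂
    rw [← hpush] at h
    exact (integrable_map_measure ((continuous_norm.pow 2).aestronglyMeasurable)
      hT.aemeasurable).1 h
  have hT'sq : Integrable (fun x => ‖T' x‖ ^ 2) P₁ := by
    have h := hm₂
    rw [← hpush'] at h
    exact (integrable_map_measure ((continuous_norm.pow 2).aestronglyMeasurable)
      hT'.aemeasurable).1 h
  have hcT : Integrable (fun x => ‖x - T x‖ ^ 2) P₁ := by
    apply ((hm₁.const_mul 2).add (hTsq.const_mul 2)).mono'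
    · exact ((measurable_id.sub hT).norm.pow_const 2).aestronglyMeasurable
    · filter_upwards with x
      simp only [Pi.add_apply]
      rw [Real.norm_eq_abs, abs_of_nonneg (by positivity)]
      have h1 : ‖x - T x‖ ≤ ‖x‖ + ‖T x‖ := norm_sub_le _ _
      have h2 : ‖x - T x‖ ^ 2 ≤ (‖x‖ + ‖T x‖) ^ 2 := pow_le_pow_left₀ (norm_nonneg _) h1 2
      nlinarith [h2, sq_nonneg (‖x‖ - ‖T x‖)]
  have hcT' : Integrable (fun x => ‖x - T' x‖ ^ 2) P₁ := by
    apply ((hm₁.const_mul 2).add (hT'sq.const_mul 2)).mono'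
    · exact ((measurable_id.sub hT').norm.pow_const 2).aestronglyMeasurable
    · filter_upwards with x
      simp only [Pi.add_apply]
      rw [Real.norm_eq_abs, abs_of_nonneg (by positivity)]
      have h1 : ‖x - T' x‖ ≤ ‖x‖ + ‖T' x‖ := norm_sub_le _ _
      have h2 : ‖x - T' x‖ ^ 2 ≤ (‖x‖ + ‖T' x‖) ^ 2 := pow_le_pow_left₀ (norm_nonneg _) h1 2
      nlinarith [h2, sq_nonneg (‖x‖ - ‖T' x‖)]
  have hintc₁ : Integrable (fun r => ‖r.1 - r.2‖ ^ 2) γ₁ := by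
    rw [hγ₁def]
    exact (integrable_map_measure hcont.aestronglyMeasurable hmg₁.aemeasurable).2 hcT
  have hintc₂ : Integrable (fun r => ‖r.1 - r.2‖ ^ 2) γ₂ := by
    rw [hγ₂def]
    exact (integrable_map_measure hcont.aestronglyMeasurable hmg₂.aemeasurable).2 hcT'
  have hintcb : Integrable (fun r => ‖r.1 - r.2‖ ^ 2) γb := by
    rw [hγbdef]
    exact (hintc₁.smul_measure h2invtop).add_measure (hintc₂.smul_measure h2invtop)
  have hcostint₁ : ∫ r, ‖r.1 - r.2‖ ^ 2 ∂γ₁ = ∫ x, ‖x - T x‖ ^ 2 ∂P₁ := by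
    rw [hγ₁def, integral_map hmg₁.aemeasurable hcont.aestronglyMeasurable]
  have hcostint₂ : ∫ r, ‖r.1 - r.2‖ ^ 2 ∂γ₂ = ∫ x, ‖x - T' x‖ ^ 2 ∂P₁ := by
    rw [hγ₂def, integral_map hmg₂.aemeasurable hcont.aestronglyMeasurable]
  have hcostγb : ∫ r, ‖r.1 - r.2‖ ^ 2 ∂γb = ∫ x, ‖x - T x‖ ^ 2 ∂P₁ := by
    rw [hγbdef, integral_add_measure (hintc₁.smul_measure h2invtop)
      (hintc₂.smul_measure h2invtop), integral_smul_measure, integral_smul_measure,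
      hcostint₁, hcostint₂, ← hcost]
    simp only [ENNReal.toReal_inv, ENNReal.toReal_ofNat, smul_eq_mul]
    ring
  have hopt2 : ∀ γ' : Measure (EuclideanSpace ℝ (Fin d) × EuclideanSpace ℝ (Fin d)),
      IsProbabilityMeasure γ' → γ'.map Prod.fst = γb.map Prod.fst →
      γ'.map Prod.snd = γb.map Prod.snd →
      ∫ r, ‖r.1 - r.2‖ ^ 2 ∂γb ≤ ∫ r, ‖r.1 - r.2‖ ^ 2 ∂γ' := by
    intro γ' h1 h2 h3
    rw [hcostγb]
    exact hopt γ' h1 (by rw [h2, hfstγb]) (by rw [h3, hsndγb])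
  set S := {r : EuclideanSpace ℝ (Fin d) × EuclideanSpace ℝ (Fin d) |
    ∀ ε : ℝ, 0 < ε → 0 < γb (Metric.ball r ε)} with hSdef
  have hSclosed : IsClosed S := isClosed_posSet γb
  have hSnull : γb Sᶜ = 0 := compl_posSet_null γb
  have hmono : ∀ pp ∈ S, ∀ qq ∈ S, 0 ≤ ⟪pp.1 - qq.1, pp.2 - qq.2⟫ :=
    fun pp hpp qq hqq => coupling_support_mono γb hintcb hopt2 pp qq hpp hqq
  obtain ⟨N, hNm, hNnull, hNs⟩ := monotone_closed_ae_single hSclosed hmono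
  have hP₁N : P₁ N = 0 := hac hNnull
  have hScm : MeasurableSet Sᶜ := hSclosed.measurableSet.compl
  have hγ₁S : γ₁ Sᶜ = 0 := by
    have h := hSnull
    rw [hγbdef, Measure.add_apply, Measure.smul_apply, Measure.smul_apply] at h
    have h1 := (add_eq_zero.1 h).1
    rw [smul_eq_mul] at h1
    rcases mul_eq_zero.1 h1 with h2 | h2
    · exact absurd h2 (by simp)
    · exact h2
  have hγ₂S : γ₂ Sᶜ = 0 := by
    have h := hSnull
    rw [hγbdef, Measure.add_apply, Measure.smul_apply, Measure.smul_apply] at h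
    have h1 := (add_eq_zero.1 h).2
    rw [smul_eq_mul] at h1
    rcases mul_eq_zero.1 h1 with h2 | h2
    · exact absurd h2 (by simp)
    · exact h2
  have hTS : P₁ {x | (x, T x) ∈ Sᶜ} = 0 := by
    have := hγ₁S
    rw [hγ₁def, Measure.map_apply hmg₁ hScm] at this
    exact this
  have hT'S : P₁ {x | (x, T' x) ∈ Sᶜ} = 0 := by
    have := hγ₂S
    rw [hγ₂def, Measure.map_apply hmg₂ hScm] at this
    exact this
  apply measure_mono_null
    (t := N ∪ ({x | (x, T x) ∈ Sᶜ} ∪ {x | (x, T' x) ∈ Sᶜ}))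
  · intro x hx
    by_cases h3 : x ∈ N
    · exact Or.inl h3
    by_cases h1 : (x, T x) ∈ S
    · by_cases h2 : (x, T' x) ∈ S
      · exact absurd (hNs x h3 (T x) (T' x) h1 h2) hx
      · exact Or.inr (Or.inr h2)
    · exact Or.inr (Or.inl h1)
  · exact measure_union_null hP₁N (measure_union_null hTS hT'S)
end
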